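/- Under assumptions (B), 𝔼[ M_∞^{β+δ} ] < ∞, where M_∞ = max( M_B, B(1) M_Ψ / 2 ) with M_Ψ independent of the squared Bessel process B. -/

import Mathlib

open MeasureTheory ProbabilityTheory Filter Set Asymptotics
open scoped ENNReal NNReal Classical

noncomputable section

variable {Ω : Type*} [MeasurableSpace Ω]

/-- pmf of the sum of `r` i.i.d. `Geo(p)` variables (`P[G = m] = p (1-p)^m`):
negative binomial distribution. -/
def negBinom (p : ℝ) (r m : ℕ) : ℝ :=
  (Nat.choose (m + r - 1) m : ℝ) * p ^ r * (1 - p) ^ m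

/-- Renewal sums `S_n = ξ_1 + ⋯ + ξ_n`. -/
def Sb (xi : ℤ → Ω → ℕ) (n : ℕ) (ω : Ω) : ℕ := ∑ j ∈ Finset.range n, xi (j + 1) ω

/-- `ρ_k = (1 - λ_k)/λ_k`. -/
def rhoF (lam : ℤ → Ω → ℝ) (k : ℤ) (ω : Ω) : ℝ := (1 - lam k ω) / lam k ω

/-- The sparse environment: `ω_k = λ_n` if `k = S_n` for some `n ≥ 1`, and `1/2` otherwise. -/
def envB (xi : ℤ → Ω → ℕ) (lam : ℤ → Ω → ℝ) (k : ℕ) (ω : Ω) : ℝ :=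
  if h : ∃ n : ℕ, 1 ≤ n ∧ Sb xi n ω = k then lam (h.choose : ℤ) ω else 1 / 2

/-- `Π_{m,k} = ∏_{j=m}^k ρ_j` (equal to `1` if `k < m`). -/
def Pib (lam : ℤ → Ω → ℝ) (m k : ℕ) (ω : Ω) : ℝ := ∏ j ∈ Finset.Icc m k, rhoF lam (j : ℤ) ω

/-- σ-algebra generated by the environment. -/
def envSigma (xi : ℤ → Ω → ℕ) (lam : ℤ → Ω → ℝ) : MeasurableSpace Ω :=
  ⨆ k : ℤ, MeasurableSpace.comap (fun ω => (xi k ω, lam k ω)) inferInstance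

/-- The environment `((ξ_k, λ_k))_{k ∈ ℤ}` is an i.i.d. sequence with values in
`ℕ₊ × (0,1)`. -/
structure IsSparseEnv (Pr : Measure Ω) (xi : ℤ → Ω → ℕ) (lam : ℤ → Ω → ℝ) : Prop where
  meas_xi : ∀ k, Measurable (xi k)
  meas_lam : ∀ k, Measurable (lam k)
  xi_pos : ∀ k ω, 1 ≤ xi k ω
  lam_mem : ∀ k ω, lam k ω ∈ Set.Ioo (0 : ℝ) 1
  indep : iIndepFun (fun k ω => (xi k ω, lam k ω)) Pr
  ident : ∀ k, IdentDistrib (fun ω => (xi k ω, lam k ω)) (fun ω => (xi 1 ω, lam 1 ω)) Pr Pr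

/-- Index of the block containing generation `k`, i.e. the `n` with `S_n ≤ k < S_{n+1}`. -/
def blockIdx (xi : ℤ → Ω → ℕ) (k : ℕ) (ω : Ω) : ℕ := sInf {n : ℕ | k < Sb xi (n + 1) ω}

/-- The potential `Ψ_{m,k} = Π_{m,n}` for `k ∈ [S_n, S_{n+1})`. -/
def PsiB (xi : ℤ → Ω → ℕ) (lam : ℤ → Ω → ℝ) (m k : ℕ) (ω : Ω) : ℝ :=
  Pib lam m (blockIdx xi k ω) ω

/-- σ-algebra generated by a real-indexed process. -/
def bmSig {Ω₂ : Type*} [MeasurableSpace Ω₂] (W : ℝ → Ω₂ → ℝ) : MeasurableSpace Ω₂ :=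
  ⨆ t : ℝ, MeasurableSpace.comap (W t) inferInstance

/-- `W` is a standard one-dimensional Brownian motion under `P`. -/
structure IsStdBM {Ω₂ : Type*} [MeasurableSpace Ω₂] (P : Measure Ω₂)
    (W : ℝ → Ω₂ → ℝ) : Prop where
  meas : ∀ t, Measurable (W t)
  init : ∀ᵐ ω ∂P, W 0 ω = 0
  incr : ∀ s t : ℝ, 0 ≤ s → s ≤ t →
    P.map (fun ω => W t ω - W s ω) = gaussianReal 0 (Real.toNNReal (t - s))
  indep_incr : ∀ t : ℕ → ℝ, StrictMono t → 0 ≤ t 0 →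
    iIndepFun (fun i ω => W (t (i + 1)) ω - W (t i) ω) P
  cont : ∀ᵐ ω ∂P, Continuous fun s => W s ω

/-- `M_B`: supremum over `[0,1]` of the squared Bessel process `‖(W₁(t), W₂(t))‖²`. -/
def besselMax {Ω₂ : Type*} (W₁ W₂ : ℝ → Ω₂ → ℝ) (ω : Ω₂) : ℝ :=
  ⨆ t : Set.Icc (0 : ℝ) 1, (W₁ t ω ^ 2 + W₂ t ω ^ 2)

/-- `B(1) = ‖(W₁(1), W₂(1))‖²`. -/
def besselOne {Ω₂ : Type*} (W₁ W₂ : ℝ → Ω₂ → ℝ) (ω : Ω₂) : ℝ :=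
  W₁ 1 ω ^ 2 + W₂ 1 ω ^ 2

/-- `M_∞ = max(M_B, B(1) M_Ψ / 2)`. -/
def Minfty {Ω₂ : Type*} (W₁ W₂ : ℝ → Ω₂ → ℝ) (Mψ : Ω₂ → ℝ) (ω : Ω₂) : ℝ :=
  max (besselMax W₁ W₂ ω) (besselOne W₁ W₂ ω * Mψ ω / 2)

/-- `M_{Ψ,1} = max_{k ≥ S₁ - 1} (Ψ_{1,k} + Ψ_{1,k+1})`. -/
def MPsiOne (xi : ℤ → Ω → ℕ) (lam : ℤ → Ω → ℝ) (ω : Ω) : ℝ :=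
  (⨆ (k : ℕ) (_ : Sb xi 1 ω - 1 ≤ k),
    ENNReal.ofReal (PsiB xi lam 1 k ω + PsiB xi lam 1 (k + 1) ω)).toReal

/-- A probability space carrying a two-dimensional standard Brownian motion `(W₁, W₂)`
together with a random variable `Mψ`, independent of the Brownian motion and distributed as
`M_Ψ = M_{Ψ,1}`. -/
structure MinfSetup (Pr : Measure Ω) (xi : ℤ → Ω → ℕ) (lam : ℤ → Ω → ℝ) where
  Ω₂ : Type
  m₂ : MeasurableSpace Ω₂
  P₂ : @Measure Ω₂ m₂
  W₁ : ℝ → Ω₂ → ℝ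
  W₂ : ℝ → Ω₂ → ℝ
  Mψ : Ω₂ → ℝ
  prob : IsProbabilityMeasure P₂
  bm₁ : @IsStdBM Ω₂ m₂ P₂ W₁
  bm₂ : @IsStdBM Ω₂ m₂ P₂ W₂
  indepW : Indep (@bmSig Ω₂ m₂ W₁) (@bmSig Ω₂ m₂ W₂) P₂
  indepM : Indep (@MeasurableSpace.comap Ω₂ ℝ Mψ inferInstance)
    (@bmSig Ω₂ m₂ W₁ ⊔ @bmSig Ω₂ m₂ W₂) P₂
  law : @Measure.map Ω₂ ℝ m₂ inferInstance Mψ P₂ = Pr.map (MPsiOne xi lam)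

attribute [instance] MinfSetup.m₂
section PrSide

variable {Ω : Type*} [MeasurableSpace Ω]

lemma measurable_rhoF {lam : ℤ → Ω → ℝ} (h : ∀ k, Measurable (lam k)) (k : ℤ) :
    Measurable (rhoF lam k) :=
  (measurable_const.sub (h k)).div (h k)

lemma rhoF_nonneg {lam : ℤ → Ω → ℝ} (hlam : ∀ k ω, lam k ω ∈ Set.Ioo (0:ℝ) 1) (k : ℤ) (ω : Ω) :
    0 ≤ rhoF lam k ω :=
  div_nonneg (sub_nonneg.2 (hlam k ω).2.le) (hlam k ω).1.le

lemma measurable_Sb {xi : ℤ → Ω → ℕ} (h : ∀ k, Measurable (xi k)) (n : ℕ) :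
    Measurable (Sb xi n) :=
  Finset.measurable_sum _ (fun j _ => h _)

lemma le_Sb {xi : ℤ → Ω → ℕ} (hpos : ∀ k ω, 1 ≤ xi k ω) (n : ℕ) (ω : Ω) :
    n ≤ Sb xi n ω := by
  calc n = ∑ _j ∈ Finset.range n, 1 := by simp
  _ ≤ Sb xi n ω := Finset.sum_le_sum (fun j _ => hpos _ _)

lemma blockIdx_nonempty {xi : ℤ → Ω → ℕ} (hpos : ∀ k ω, 1 ≤ xi k ω) (k : ℕ) (ω : Ω) :
    {n : ℕ | k < Sb xi (n + 1) ω}.Nonempty :=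
  ⟨k, lt_of_lt_of_le (Nat.lt_succ_self k) (le_Sb hpos (k+1) ω)⟩

lemma blockIdx_eq_iff {xi : ℤ → Ω → ℕ} (hpos : ∀ k ω, 1 ≤ xi k ω) (k : ℕ) (ω : Ω) (n : ℕ) :
    blockIdx xi k ω = n ↔ (k < Sb xi (n+1) ω ∧ ∀ m, m < n → ¬ (k < Sb xi (m+1) ω)) := by
  unfold blockIdx
  constructor
  · rintro rfl
    refine ⟨Nat.sInf_mem (blockIdx_nonempty hpos k ω), fun m hm => ?_⟩
    have := Nat.notMem_of_lt_sInf (s := {n | k < Sb xi (n + 1) ω}) hm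
    simpa using this
  · rintro ⟨h1, h2⟩
    refine le_antisymm (Nat.sInf_le h1) ?_
    by_contra h
    push_neg at h
    exact h2 _ h (Nat.sInf_mem (blockIdx_nonempty hpos k ω))

lemma measurable_blockIdx {xi : ℤ → Ω → ℕ} (h : ∀ k, Measurable (xi k))
    (hpos : ∀ k ω, 1 ≤ xi k ω) (k : ℕ) : Measurable (blockIdx xi k) := by
  apply measurable_to_countable'
  intro n
  have hset : blockIdx xi k ⁻¹' {n} =
      (Sb xi (n+1) ⁻¹' Set.Ioi k) ∩ ⋂ (m : ℕ) (_ : m < n), (Sb xi (m+1) ⁻¹' Set.Ioi k)ᶜ := by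
    ext ω
    simp only [Set.mem_preimage, Set.mem_singleton_iff, Set.mem_inter_iff, Set.mem_iInter,
      Set.mem_compl_iff, Set.mem_Ioi]
    rw [blockIdx_eq_iff hpos]
  rw [hset]
  exact ((measurable_Sb h _) measurableSet_Ioi).inter
    (MeasurableSet.iInter (fun m => MeasurableSet.iInter (fun _ =>
      ((measurable_Sb h _) measurableSet_Ioi).compl)))

lemma measurable_Pib {lam : ℤ → Ω → ℝ} (h : ∀ k, Measurable (lam k)) (m k : ℕ) :
    Measurable (fun ω => Pib lam m k ω) :=
  Finset.measurable_prod _ (fun j _ => measurable_rhoF h _)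

lemma measurable_PsiB {xi : ℤ → Ω → ℕ} {lam : ℤ → Ω → ℝ}
    (hxi : ∀ k, Measurable (xi k)) (hpos : ∀ k ω, 1 ≤ xi k ω)
    (hlam : ∀ k, Measurable (lam k)) (m k : ℕ) :
    Measurable (fun ω => PsiB xi lam m k ω) := by
  have hF : Measurable (fun q : Ω × ℕ => Pib lam m q.2 q.1) :=
    measurable_from_prod_countable_left (fun n => measurable_Pib hlam m n)
  exact hF.comp (measurable_id.prodMk (measurable_blockIdx hxi hpos k))

lemma measurable_MPsiOne {xi : ℤ → Ω → ℕ} {lam : ℤ → Ω → ℝ}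
    (hxi : ∀ k, Measurable (xi k)) (hpos : ∀ k ω, 1 ≤ xi k ω)
    (hlam : ∀ k, Measurable (lam k)) : Measurable (MPsiOne xi lam) := by
  unfold MPsiOne
  apply Measurable.ennreal_toReal
  apply Measurable.iSup
  intro k
  have : (fun ω => ⨆ (_ : Sb xi 1 ω - 1 ≤ k),
      ENNReal.ofReal (PsiB xi lam 1 k ω + PsiB xi lam 1 (k + 1) ω)) =
      (fun ω => if Sb xi 1 ω - 1 ≤ k then
        ENNReal.ofReal (PsiB xi lam 1 k ω + PsiB xi lam 1 (k + 1) ω) else 0) := by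
    funext ω
    exact iSup_eq_if _
  rw [this]
  refine Measurable.ite ?_ ?_ measurable_const
  · exact measurableSet_le ((measurable_Sb hxi 1).sub measurable_const) measurable_const
  · exact ((measurable_PsiB hxi hpos hlam 1 k).add
      (measurable_PsiB hxi hpos hlam 1 (k+1))).ennreal_ofReal

lemma Pib_nonneg {lam : ℤ → Ω → ℝ} (hlam : ∀ k ω, lam k ω ∈ Set.Ioo (0:ℝ) 1) (m k : ℕ)
    (ω : Ω) : 0 ≤ Pib lam m k ω :=
  Finset.prod_nonneg (fun j _ => rhoF_nonneg hlam _ ω)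

lemma lintegral_finset_prod_indep {Pr : Measure Ω} [IsProbabilityMeasure Pr] {G : ℤ → Ω → ℝ≥0∞}
    (hmeas : ∀ j, Measurable (G j))
    (hind : iIndepFun G Pr) (s : Finset ℤ) :
    ∫⁻ ω, ∏ j ∈ s, G j ω ∂Pr = ∏ j ∈ s, ∫⁻ ω, G j ω ∂Pr := by
  classical
  induction s using Finset.induction_on with
  | empty => simp
  | @insert i s hnm ih =>
    have hIF : IndepFun (fun ω => G i ω) (fun ω => ∏ j ∈ s, G j ω) Pr := by
      have := (hind.indepFun_finset_prod_of_notMem hmeas hnm).symm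
      convert this using 1
      funext ω
      simp [Finset.prod_apply]
    calc ∫⁻ ω, ∏ j ∈ insert i s, G j ω ∂Pr
        = ∫⁻ ω, ((fun ω => G i ω) * (fun ω => ∏ j ∈ s, G j ω)) ω ∂Pr := by
          simp only [Finset.prod_insert hnm, Pi.mul_apply]
      _ = (∫⁻ ω, G i ω ∂Pr) * ∫⁻ ω, ∏ j ∈ s, G j ω ∂Pr :=
          lintegral_mul_eq_lintegral_mul_lintegral_of_indepFun'
            (hmeas i).aemeasurable
            (Finset.measurable_prod s (fun j _ => hmeas j)).aemeasurable hIF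
      _ = ∏ j ∈ insert i s, ∫⁻ ω, G j ω ∂Pr := by rw [Finset.prod_insert hnm, ih]

lemma mpsi_lintegral_lt_top {Pr : Measure Ω} [IsProbabilityMeasure Pr]
    {xi : ℤ → Ω → ℕ} {lam : ℤ → Ω → ℝ} (hEnv : IsSparseEnv Pr xi lam)
    {p : ℝ} (hp0 : 0 < p)
    (hmomρ : Integrable (fun ω => rhoF lam 1 ω ^ p) Pr)
    (hmomρ1 : ∫ ω, rhoF lam 1 ω ^ p ∂Pr < 1) :
    ∫⁻ ω, ENNReal.ofReal (MPsiOne xi lam ω ^ p) ∂Pr < ⊤ := by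
  classical
  set G : ℤ → Ω → ℝ≥0∞ := fun j ω => ENNReal.ofReal (rhoF lam j ω ^ p) with hG
  have hg : Measurable (fun q : ℕ × ℝ => ENNReal.ofReal (((1 - q.2) / q.2) ^ p)) := by
    apply Measurable.ennreal_ofReal
    exact ((measurable_const.sub measurable_snd).div measurable_snd).pow measurable_const
  have hGmeas : ∀ j, Measurable (G j) := fun j =>
    ((measurable_rhoF hEnv.meas_lam j).pow measurable_const).ennreal_ofReal
  have hGind : iIndepFun G Pr := by
    have := hEnv.indep.comp
      (fun _ => fun q : ℕ × ℝ => ENNReal.ofReal (((1 - q.2) / q.2) ^ p)) (fun _ => hg)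
    exact this
  set r : ℝ≥0∞ := ∫⁻ ω, G 1 ω ∂Pr with hr
  have hrhononneg : ∀ j ω, (0:ℝ) ≤ rhoF lam j ω ^ p := fun j ω =>
    Real.rpow_nonneg (rhoF_nonneg hEnv.lam_mem j ω) p
  have hr_eq : r = ENNReal.ofReal (∫ ω, rhoF lam 1 ω ^ p ∂Pr) :=
    (ofReal_integral_eq_lintegral_ofReal hmomρ
      (Filter.Eventually.of_forall (fun ω => hrhononneg 1 ω))).symm
  have hr1 : r < 1 := by
    rw [hr_eq]; exact ENNReal.ofReal_lt_one.mpr hmomρ1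
  have hGj : ∀ j : ℤ, ∫⁻ ω, G j ω ∂Pr = r := by
    intro j
    have hid : IdentDistrib (G j) (G 1) Pr Pr := by
      have := (hEnv.ident j).comp hg
      exact this
    rw [hr]
    calc ∫⁻ ω, G j ω ∂Pr = ∫⁻ x, x ∂(Pr.map (G j)) :=
        (lintegral_map measurable_id (hGmeas j)).symm
      _ = ∫⁻ x, x ∂(Pr.map (G 1)) := by rw [hid.map_eq]
      _ = ∫⁻ ω, G 1 ω ∂Pr := lintegral_map measurable_id (hGmeas 1)
  -- pointwise bound
  have hpoint : ∀ ω, ENNReal.ofReal (MPsiOne xi lam ω ^ p) ≤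
      ENNReal.ofReal (2 ^ p) * ∑' n : ℕ, ENNReal.ofReal (Pib lam 1 n ω ^ p) := by
    intro ω
    set T : ℝ≥0∞ := ∑' n : ℕ, ENNReal.ofReal (Pib lam 1 n ω ^ p) with hT
    set U : ℝ≥0∞ := ⨆ n : ℕ, ENNReal.ofReal (Pib lam 1 n ω) with hU
    set A : ℝ≥0∞ := ⨆ (k : ℕ) (_ : Sb xi 1 ω - 1 ≤ k),
      ENNReal.ofReal (PsiB xi lam 1 k ω + PsiB xi lam 1 (k + 1) ω) with hA
    have hMP : MPsiOne xi lam ω = A.toReal := rfl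
    have hA2U : A ≤ 2 * U := by
      rw [hA]
      refine iSup_le (fun k => iSup_le (fun _ => ?_))
      refine le_trans ENNReal.ofReal_add_le ?_
      rw [two_mul]
      refine add_le_add ?_ ?_
      · exact le_iSup (fun n => ENNReal.ofReal (Pib lam 1 n ω)) (blockIdx xi k ω)
      · exact le_iSup (fun n => ENNReal.ofReal (Pib lam 1 n ω)) (blockIdx xi (k+1) ω)
    have hUT : U ^ p ≤ T := by
      have hUle : U ≤ T ^ (1/p) := by
        rw [hU]
        refine iSup_le (fun n => ?_)
        have h1 : ENNReal.ofReal (Pib lam 1 n ω) =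
            (ENNReal.ofReal (Pib lam 1 n ω ^ p)) ^ (1/p) := by
          rw [← ENNReal.ofReal_rpow_of_nonneg (Pib_nonneg hEnv.lam_mem 1 n ω) hp0.le,
            ← ENNReal.rpow_mul]
          rw [mul_one_div, div_self hp0.ne', ENNReal.rpow_one]
        rw [h1]
        exact ENNReal.rpow_le_rpow (ENNReal.le_tsum n) (by positivity)
      calc U ^ p ≤ (T ^ (1/p)) ^ p := ENNReal.rpow_le_rpow hUle hp0.le
        _ = T := by rw [← ENNReal.rpow_mul, one_div, inv_mul_cancel₀ hp0.ne', ENNReal.rpow_one]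
    by_cases hAtop : A = ⊤
    · rw [hMP, hAtop]
      simp [Real.zero_rpow hp0.ne']
    · rw [hMP]
      have h1 : ENNReal.ofReal (A.toReal ^ p) = A ^ p := by
        rw [← ENNReal.ofReal_rpow_of_nonneg ENNReal.toReal_nonneg hp0.le,
          ENNReal.ofReal_toReal hAtop]
      rw [h1]
      calc A ^ p ≤ (2 * U) ^ p := ENNReal.rpow_le_rpow hA2U hp0.le
        _ = 2 ^ p * U ^ p := ENNReal.mul_rpow_of_nonneg _ _ hp0.le
        _ ≤ 2 ^ p * T := mul_le_mul_right hUT _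
        _ = ENNReal.ofReal (2 ^ p) * T := by
            rw [← ENNReal.ofReal_rpow_of_nonneg (by norm_num : (0:ℝ) ≤ 2) hp0.le,
              ENNReal.ofReal_ofNat]
  -- integrate
  have hmeasn : ∀ n : ℕ, Measurable (fun ω => ENNReal.ofReal (Pib lam 1 n ω ^ p)) :=
    fun n => ((measurable_Pib hEnv.meas_lam 1 n).pow measurable_const).ennreal_ofReal
  have hprodn : ∀ n : ℕ, ∫⁻ ω, ENNReal.ofReal (Pib lam 1 n ω ^ p) ∂Pr = r ^ n := by
    intro n
    have hrw : ∀ ω, ENNReal.ofReal (Pib lam 1 n ω ^ p) = ∏ j ∈ Finset.Icc 1 n, G (j:ℤ) ω := by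
      intro ω
      rw [Pib, ← Real.finset_prod_rpow _ _ (fun j _ => rhoF_nonneg hEnv.lam_mem _ ω) p,
        ENNReal.ofReal_prod_of_nonneg (fun j _ => hrhononneg _ ω)]
    simp_rw [hrw]
    have hemb : ∀ ω, ∏ j ∈ Finset.Icc 1 n, G (j:ℤ) ω =
        ∏ i ∈ (Finset.Icc 1 n).map ⟨(Nat.cast : ℕ → ℤ), Nat.cast_injective⟩, G i ω := by
      intro ω; rw [Finset.prod_map]; rfl
    simp_rw [hemb]
    rw [lintegral_finset_prod_indep hGmeas hGind]
    rw [Finset.prod_congr rfl (fun i _ => hGj i), Finset.prod_const, Finset.card_map,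
      Nat.card_Icc]
    simp
  calc ∫⁻ ω, ENNReal.ofReal (MPsiOne xi lam ω ^ p) ∂Pr
      ≤ ∫⁻ ω, ENNReal.ofReal (2 ^ p) * ∑' n : ℕ, ENNReal.ofReal (Pib lam 1 n ω ^ p) ∂Pr :=
        lintegral_mono hpoint
    _ = ENNReal.ofReal (2 ^ p) * ∑' n : ℕ, ∫⁻ ω, ENNReal.ofReal (Pib lam 1 n ω ^ p) ∂Pr := by
        rw [lintegral_const_mul _ (by
          exact Measurable.ennreal_tsum (fun n => hmeasn n)),
          lintegral_tsum (fun n => (hmeasn n).aemeasurable)]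
    _ = ENNReal.ofReal (2 ^ p) * ∑' n : ℕ, r ^ n := by simp_rw [hprodn]
    _ = ENNReal.ofReal (2 ^ p) * (1 - r)⁻¹ := by rw [ENNReal.tsum_geometric]
    _ < ⊤ := ENNReal.mul_lt_top ENNReal.ofReal_lt_top
        (ENNReal.inv_lt_top.mpr (tsub_pos_of_lt hr1))

end PrSide
section BMSide

variable {Ω₂ : Type*} [MeasurableSpace Ω₂] {P : Measure Ω₂} [IsProbabilityMeasure P]

/-- Max of dyadic increments of level `m` over `[0,1]`. -/
noncomputable def DyMax (W : ℝ → Ω₂ → ℝ) (m : ℕ) (ω : Ω₂) : ℝ≥0∞ :=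
  ⨆ k ∈ Finset.range (2^m), ENNReal.ofReal |W (((k:ℝ)+1)/2^m) ω - W ((k:ℝ)/2^m) ω|

/-- Chaining bound for the sup of `|W|` over `[0,1]`. -/
noncomputable def gBound (W : ℝ → Ω₂ → ℝ) (ω : Ω₂) : ℝ≥0∞ := ∑' m, DyMax W m ω

lemma measurable_DyMax {W : ℝ → Ω₂ → ℝ} (hW : ∀ t, Measurable (W t)) (m : ℕ) :
    Measurable (DyMax W m) := by
  unfold DyMax
  refine Measurable.iSup (fun k => ?_)
  refine Measurable.iSup (fun _ => ?_)
  exact (((hW _).sub (hW _)).abs).ennreal_ofReal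

lemma measurable_gBound {W : ℝ → Ω₂ → ℝ} (hW : ∀ t, Measurable (W t)) :
    Measurable (gBound W) :=
  Measurable.ennreal_tsum (fun m => measurable_DyMax hW m)

lemma gaussian_moment4_one_lt_top :
    ∫⁻ x, ENNReal.ofReal (x ^ (4:ℕ)) ∂(gaussianReal 0 1) < ⊤ := by
  rw [gaussianReal_of_var_ne_zero 0 one_ne_zero,
    lintegral_withDensity_eq_lintegral_mul _ (measurable_gaussianPDF 0 1)
      ((measurable_id'.pow_const 4).ennreal_ofReal)]
  have hint : Integrable (fun x : ℝ => gaussianPDFReal 0 1 x * x ^ (4:ℕ)) := by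
    have h0 : Integrable (fun x : ℝ => x ^ ((4:ℕ):ℝ) * Real.exp (-(1/2 : ℝ) * x ^ 2)) :=
      integrable_rpow_mul_exp_neg_mul_sq (by norm_num) (by norm_num)
    have heq : (fun x : ℝ => gaussianPDFReal 0 1 x * x ^ (4:ℕ)) =
        fun x : ℝ => (Real.sqrt (2 * Real.pi))⁻¹ *
          (x ^ ((4:ℕ):ℝ) * Real.exp (-(1/2 : ℝ) * x ^ 2)) := by
      funext x
      rw [Real.rpow_natCast, gaussianPDFReal]
      push_cast
      ring_nf
    rw [heq]
    exact h0.const_mul _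
  calc ∫⁻ x, (gaussianPDF 0 1 * fun x => ENNReal.ofReal (x ^ (4:ℕ))) x
      = ∫⁻ x, ENNReal.ofReal (gaussianPDFReal 0 1 x * x ^ (4:ℕ)) := by
        refine lintegral_congr (fun x => ?_)
        simp only [Pi.mul_apply, gaussianPDF]
        rw [← ENNReal.ofReal_mul (gaussianPDFReal_nonneg 0 1 x)]
    _ ≤ ∫⁻ x, ‖gaussianPDFReal 0 1 x * x ^ (4:ℕ)‖ₑ := by
        refine lintegral_mono (fun x => ?_)
        rw [Real.enorm_eq_ofReal_abs]
        exact ENNReal.ofReal_le_ofReal (le_abs_self _)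
    _ < ⊤ := hint.2

lemma gaussian_moment4_scale (v : ℝ≥0) :
    ∫⁻ x, ENNReal.ofReal (x ^ (4:ℕ)) ∂(gaussianReal 0 v) =
      ENNReal.ofReal ((v:ℝ)^2) * ∫⁻ x, ENNReal.ofReal (x ^ (4:ℕ)) ∂(gaussianReal 0 1) := by
  have hmap := gaussianReal_map_const_mul (μ := 0) (v := 1) (Real.sqrt v)
  have hv : NNReal.mk ((Real.sqrt v)^2) (sq_nonneg _) * 1 = v := by
    ext
    simp [Real.sq_sqrt v.2]
  rw [mul_zero, hv] at hmap
  rw [← hmap, lintegral_map (g := fun x => Real.sqrt v * x) ((measurable_id'.pow_const 4).ennreal_ofReal)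
    (measurable_const.mul measurable_id')]
  have : ∀ x : ℝ, ENNReal.ofReal ((Real.sqrt v * x) ^ (4:ℕ)) =
      ENNReal.ofReal ((v:ℝ)^2) * ENNReal.ofReal (x ^ (4:ℕ)) := by
    intro x
    rw [mul_pow, ← ENNReal.ofReal_mul (by positivity)]
    congr 1
    have h4 : (Real.sqrt v) ^ (4:ℕ) = (v:ℝ)^2 := by
      rw [show (4:ℕ) = 2*2 from rfl, pow_mul, Real.sq_sqrt v.coe_nonneg]
    rw [h4]
  simp_rw [this]
  rw [lintegral_const_mul _ ((measurable_id'.pow_const 4).ennreal_ofReal)]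

lemma inc_moment4 {W : ℝ → Ω₂ → ℝ} (hBM : IsStdBM P W) {s t : ℝ} (hs : 0 ≤ s) (hst : s ≤ t) :
    ∫⁻ ω, ENNReal.ofReal ((W t ω - W s ω) ^ (4:ℕ)) ∂P =
      ENNReal.ofReal ((t - s)^2) * ∫⁻ x, ENNReal.ofReal (x ^ (4:ℕ)) ∂(gaussianReal 0 1) := by
  have h1 : ∫⁻ ω, ENNReal.ofReal ((W t ω - W s ω) ^ (4:ℕ)) ∂P =
      ∫⁻ x, ENNReal.ofReal (x ^ (4:ℕ)) ∂(P.map (fun ω => W t ω - W s ω)) := by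
    rw [lintegral_map (g := fun ω => W t ω - W s ω) ((measurable_id'.pow_const 4).ennreal_ofReal)
      ((hBM.meas t).sub (hBM.meas s))]
  rw [h1, hBM.incr s t hs hst, gaussian_moment4_scale]
  congr 2
  rw [Real.coe_toNNReal _ (sub_nonneg.mpr hst)]

lemma DyMax_moment4 {W : ℝ → Ω₂ → ℝ} (hBM : IsStdBM P W) (m : ℕ) :
    ∫⁻ ω, DyMax W m ω ^ (4:ℝ) ∂P ≤
      ENNReal.ofReal ((1/2:ℝ)^m) * ∫⁻ x, ENNReal.ofReal (x ^ (4:ℕ)) ∂(gaussianReal 0 1) := by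
  set K := ∫⁻ x, ENNReal.ofReal (x ^ (4:ℕ)) ∂(gaussianReal 0 1) with hK
  have hpoint : ∀ ω, DyMax W m ω ^ (4:ℝ) ≤
      ∑ k ∈ Finset.range (2^m),
        ENNReal.ofReal ((W (((k:ℝ)+1)/2^m) ω - W ((k:ℝ)/2^m) ω) ^ (4:ℕ)) := by
    intro ω
    have hD : DyMax W m ω ≤ (∑ k ∈ Finset.range (2^m),
        ENNReal.ofReal ((W (((k:ℝ)+1)/2^m) ω - W ((k:ℝ)/2^m) ω) ^ (4:ℕ))) ^ ((4:ℝ)⁻¹) := by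
      refine iSup₂_le (fun k hk => ?_)
      set x := W (((k:ℝ)+1)/2^m) ω - W ((k:ℝ)/2^m) ω with hx
      have h1 : ENNReal.ofReal |x| = (ENNReal.ofReal (x ^ (4:ℕ))) ^ ((4:ℝ)⁻¹) := by
        have h2 : x ^ (4:ℕ) = |x| ^ (4:ℕ) := by
          rw [← abs_pow]
          exact (abs_of_nonneg (by positivity)).symm
        rw [h2, ENNReal.ofReal_pow (abs_nonneg x), ← ENNReal.rpow_natCast,
          ← ENNReal.rpow_mul]
        norm_num
      rw [h1]
      refine ENNReal.rpow_le_rpow ?_ (by norm_num)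
      exact Finset.single_le_sum (f := fun k : ℕ => ENNReal.ofReal
        ((W (((k:ℝ)+1)/2^m) ω - W ((k:ℝ)/2^m) ω) ^ (4:ℕ))) (fun _ _ => zero_le) hk
    calc DyMax W m ω ^ (4:ℝ) ≤ ((∑ k ∈ Finset.range (2^m),
          ENNReal.ofReal ((W (((k:ℝ)+1)/2^m) ω - W ((k:ℝ)/2^m) ω) ^ (4:ℕ))) ^ ((4:ℝ)⁻¹)) ^ (4:ℝ) :=
        ENNReal.rpow_le_rpow hD (by norm_num)
      _ = _ := by rw [← ENNReal.rpow_mul]; norm_num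
  calc ∫⁻ ω, DyMax W m ω ^ (4:ℝ) ∂P
      ≤ ∫⁻ ω, ∑ k ∈ Finset.range (2^m),
          ENNReal.ofReal ((W (((k:ℝ)+1)/2^m) ω - W ((k:ℝ)/2^m) ω) ^ (4:ℕ)) ∂P :=
        lintegral_mono hpoint
    _ = ∑ k ∈ Finset.range (2^m), ∫⁻ ω,
          ENNReal.ofReal ((W (((k:ℝ)+1)/2^m) ω - W ((k:ℝ)/2^m) ω) ^ (4:ℕ)) ∂P := by
        refine lintegral_finset_sum _ (fun k _ => ?_)
        exact (((hBM.meas _).sub (hBM.meas _)).pow_const 4).ennreal_ofReal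
    _ = ∑ k ∈ Finset.range (2^m), ENNReal.ofReal (((1:ℝ)/4^m)) * K := by
        refine Finset.sum_congr rfl (fun k hk => ?_)
        have hs : (0:ℝ) ≤ (k:ℝ)/2^m := by positivity
        have hst : (k:ℝ)/2^m ≤ ((k:ℝ)+1)/2^m := by gcongr; linarith
        rw [inc_moment4 hBM hs hst]
        congr 2
        have h1 : ((k:ℝ)+1)/2^m - (k:ℝ)/2^m = 1/2^m := by field_simp; ring
        have h2 : ((2:ℝ)^m)^2 = 4^m := by
          rw [← pow_mul, mul_comm, pow_mul]; norm_num
        rw [h1, div_pow, one_pow, h2]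
    _ = ENNReal.ofReal ((1/2:ℝ)^m) * K := by
        rw [Finset.sum_const, Finset.card_range, nsmul_eq_mul, ← mul_assoc]
        congr 1
        have h2 : ((2^m : ℕ) : ℝ≥0∞) = ENNReal.ofReal ((2:ℝ)^m) := by
          rw [ENNReal.ofReal_pow (by norm_num : (0:ℝ) ≤ 2)]
          push_cast
          norm_num
        rw [h2, ← ENNReal.ofReal_mul (by positivity)]
        congr 1
        rw [show ((4:ℝ))^m = (2^m)*(2^m) by rw [← mul_pow]; norm_num]
        rw [div_pow, one_pow]
        field_simp
lemma sum_DyMax_Lp {W : ℝ → Ω₂ → ℝ} (hW : ∀ t, Measurable (W t)) (N : ℕ) :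
    (∫⁻ ω, (∑ m ∈ Finset.range N, DyMax W m ω) ^ (4:ℝ) ∂P) ^ ((1:ℝ)/4) ≤
      ∑ m ∈ Finset.range N, (∫⁻ ω, DyMax W m ω ^ (4:ℝ) ∂P) ^ ((1:ℝ)/4) := by
  induction N with
  | zero =>
    simp only [Finset.range_zero, Finset.sum_empty]
    rw [show ∫⁻ _ω, (0:ℝ≥0∞) ^ (4:ℝ) ∂P = 0 by
      simp [ENNReal.zero_rpow_of_pos (by norm_num : (0:ℝ) < 4)]]
    simp [ENNReal.zero_rpow_of_pos (by norm_num : (0:ℝ) < 1/4)]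
  | succ N ih =>
    have hsum : AEMeasurable (fun ω => ∑ m ∈ Finset.range N, DyMax W m ω) P :=
      (Finset.measurable_sum _ (fun m _ => measurable_DyMax hW m)).aemeasurable
    have hN : AEMeasurable (DyMax W N) P := (measurable_DyMax hW N).aemeasurable
    have hadd := ENNReal.lintegral_Lp_add_le hsum hN (by norm_num : (1:ℝ) ≤ 4)
    calc (∫⁻ ω, (∑ m ∈ Finset.range (N+1), DyMax W m ω) ^ (4:ℝ) ∂P) ^ ((1:ℝ)/4)
        = (∫⁻ ω, ((fun ω => ∑ m ∈ Finset.range N, DyMax W m ω) + DyMax W N) ω ^ (4:ℝ) ∂P) ^ ((1:ℝ)/4) := by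
          congr 1
          refine lintegral_congr (fun ω => ?_)
          rw [Finset.sum_range_succ]
          rfl
      _ ≤ (∫⁻ ω, (∑ m ∈ Finset.range N, DyMax W m ω) ^ (4:ℝ) ∂P) ^ ((1:ℝ)/4)
            + (∫⁻ ω, DyMax W N ω ^ (4:ℝ) ∂P) ^ ((1:ℝ)/4) := hadd
      _ ≤ ∑ m ∈ Finset.range N, (∫⁻ ω, DyMax W m ω ^ (4:ℝ) ∂P) ^ ((1:ℝ)/4)
            + (∫⁻ ω, DyMax W N ω ^ (4:ℝ) ∂P) ^ ((1:ℝ)/4) := add_le_add_left ih _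
      _ = ∑ m ∈ Finset.range (N+1), (∫⁻ ω, DyMax W m ω ^ (4:ℝ) ∂P) ^ ((1:ℝ)/4) := by
          rw [Finset.sum_range_succ]

lemma lintegral_gBound4_lt_top {W : ℝ → Ω₂ → ℝ} (hBM : IsStdBM P W) :
    ∫⁻ ω, gBound W ω ^ (4:ℝ) ∂P < ⊤ := by
  set K := ∫⁻ x, ENNReal.ofReal (x ^ (4:ℕ)) ∂(gaussianReal 0 1) with hK
  have hKtop : K < ⊤ := gaussian_moment4_one_lt_top
  set q : ℝ≥0∞ := (ENNReal.ofReal (1/2:ℝ)) ^ ((1:ℝ)/4) with hq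
  have hq1 : q < 1 := ENNReal.rpow_lt_one (by
      rw [ENNReal.ofReal_lt_one]; norm_num) (by norm_num)
  set C : ℝ≥0∞ := (1 - q)⁻¹ * K ^ ((1:ℝ)/4) with hC
  have hCtop : C ≠ ⊤ := by
    refine ENNReal.mul_ne_top ?_ ?_
    · exact ENNReal.inv_ne_top.mpr (tsub_pos_of_lt hq1).ne'
    · exact (ENNReal.rpow_lt_top_of_nonneg (by norm_num) hKtop.ne).ne
  have hterm : ∀ m : ℕ, (∫⁻ ω, DyMax W m ω ^ (4:ℝ) ∂P) ^ ((1:ℝ)/4) ≤ q ^ m * K ^ ((1:ℝ)/4) := by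
    intro m
    calc (∫⁻ ω, DyMax W m ω ^ (4:ℝ) ∂P) ^ ((1:ℝ)/4)
        ≤ (ENNReal.ofReal ((1/2:ℝ)^m) * K) ^ ((1:ℝ)/4) :=
          ENNReal.rpow_le_rpow (DyMax_moment4 hBM m) (by norm_num)
      _ = q ^ m * K ^ ((1:ℝ)/4) := by
          rw [ENNReal.mul_rpow_of_nonneg _ _ (by norm_num : (0:ℝ) ≤ 1/4)]
          congr 1
          rw [ENNReal.ofReal_pow (by norm_num : (0:ℝ) ≤ 1/2), ← ENNReal.rpow_natCast
            (ENNReal.ofReal (1/2:ℝ)), ← ENNReal.rpow_mul, mul_comm, ENNReal.rpow_mul,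
            ENNReal.rpow_natCast]
  have hpartial : ∀ N : ℕ, (∫⁻ ω, (∑ m ∈ Finset.range N, DyMax W m ω) ^ (4:ℝ) ∂P) ≤ C ^ (4:ℝ) := by
    intro N
    have h1 : (∫⁻ ω, (∑ m ∈ Finset.range N, DyMax W m ω) ^ (4:ℝ) ∂P) ^ ((1:ℝ)/4) ≤ C := by
      calc (∫⁻ ω, (∑ m ∈ Finset.range N, DyMax W m ω) ^ (4:ℝ) ∂P) ^ ((1:ℝ)/4)
          ≤ ∑ m ∈ Finset.range N, (∫⁻ ω, DyMax W m ω ^ (4:ℝ) ∂P) ^ ((1:ℝ)/4) :=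
            sum_DyMax_Lp hBM.meas N
        _ ≤ ∑ m ∈ Finset.range N, q ^ m * K ^ ((1:ℝ)/4) :=
            Finset.sum_le_sum (fun m _ => hterm m)
        _ ≤ ∑' m : ℕ, q ^ m * K ^ ((1:ℝ)/4) := ENNReal.sum_le_tsum _
        _ = (1 - q)⁻¹ * K ^ ((1:ℝ)/4) := by
            rw [ENNReal.tsum_mul_right, ENNReal.tsum_geometric]
    calc ∫⁻ ω, (∑ m ∈ Finset.range N, DyMax W m ω) ^ (4:ℝ) ∂P
        = ((∫⁻ ω, (∑ m ∈ Finset.range N, DyMax W m ω) ^ (4:ℝ) ∂P) ^ ((1:ℝ)/4)) ^ (4:ℝ) := by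
          rw [← ENNReal.rpow_mul]; norm_num
      _ ≤ C ^ (4:ℝ) := ENNReal.rpow_le_rpow h1 (by norm_num)
  have hgsup : ∀ ω, gBound W ω ^ (4:ℝ) =
      ⨆ N : ℕ, (∑ m ∈ Finset.range N, DyMax W m ω) ^ (4:ℝ) := by
    intro ω
    rw [gBound, ENNReal.tsum_eq_iSup_nat]
    exact Monotone.map_iSup_of_continuousAt (f := fun x : ℝ≥0∞ => x ^ (4:ℝ))
      (g := fun N => ∑ m ∈ Finset.range N, DyMax W m ω)
      (ENNReal.continuous_rpow_const.continuousAt)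
      (fun a b hab => ENNReal.rpow_le_rpow hab (by norm_num))
      (by simp [ENNReal.zero_rpow_of_pos (by norm_num : (0:ℝ) < 4)])
  calc ∫⁻ ω, gBound W ω ^ (4:ℝ) ∂P
      = ∫⁻ ω, ⨆ N : ℕ, (∑ m ∈ Finset.range N, DyMax W m ω) ^ (4:ℝ) ∂P := by
        refine lintegral_congr (fun ω => hgsup ω)
    _ = ⨆ N : ℕ, ∫⁻ ω, (∑ m ∈ Finset.range N, DyMax W m ω) ^ (4:ℝ) ∂P := by
        refine lintegral_iSup (fun N => ?_) (fun N M hNM ω => ?_)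
        · exact (Finset.measurable_sum _ (fun m _ => measurable_DyMax hBM.meas m)).pow
            measurable_const
        · refine ENNReal.rpow_le_rpow ?_ (by norm_num)
          exact Finset.sum_le_sum_of_subset (Finset.range_subset_range.mpr hNM)
    _ ≤ C ^ (4:ℝ) := iSup_le hpartial
    _ < ⊤ := ENNReal.rpow_lt_top_of_nonneg (by norm_num) hCtop
lemma dyadic_tendsto {t : ℝ} (ht0 : 0 ≤ t) :
    Filter.Tendsto (fun M : ℕ => ((⌊(2:ℝ)^M * t⌋₊ : ℝ)/2^M : ℝ)) atTop (nhds t) := by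
  have hle : ∀ M : ℕ, ((⌊(2:ℝ)^M * t⌋₊ : ℝ)/2^M) ≤ t := fun M => by
    rw [div_le_iff₀ (by positivity)]
    calc (⌊(2:ℝ)^M * t⌋₊ : ℝ) ≤ 2^M * t := Nat.floor_le (by positivity)
    _ = t * 2^M := mul_comm _ _
  have hge : ∀ M : ℕ, t - (1/2:ℝ)^M ≤ ((⌊(2:ℝ)^M * t⌋₊ : ℝ)/2^M) := fun M => by
    have h1 : (2:ℝ)^M * t < (⌊(2:ℝ)^M * t⌋₊ : ℝ) + 1 := Nat.lt_floor_add_one _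
    have h2 : (1/2:ℝ)^M = 1/2^M := by rw [div_pow, one_pow]
    rw [h2, sub_le_iff_le_add, ← add_div, le_div_iff₀ (by positivity)]
    nlinarith [h1]
  have hlow : Filter.Tendsto (fun M : ℕ => t - (1/2:ℝ)^M) atTop (nhds t) := by
    have := tendsto_pow_atTop_nhds_zero_of_lt_one (by norm_num : (0:ℝ) ≤ 1/2)
      (by norm_num : (1/2:ℝ) < 1)
    simpa using tendsto_const_nhds.sub this
  exact tendsto_of_tendsto_of_tendsto_of_le_of_le hlow tendsto_const_nhds hge hle

lemma chain_bound {W : ℝ → Ω₂ → ℝ} (hBM : IsStdBM P W) :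
    ∀ᵐ ω ∂P, ∀ t ∈ Set.Icc (0:ℝ) 1, ENNReal.ofReal |W t ω| ≤ gBound W ω := by
  filter_upwards [hBM.init, hBM.cont] with ω hW0 hcont
  rintro t ⟨ht0, ht1⟩
  have key : ∀ M : ℕ, ENNReal.ofReal |W ((⌊(2:ℝ)^M * t⌋₊ : ℝ)/2^M) ω| ≤
      ∑ m ∈ Finset.range (M+1), DyMax W m ω := by
    intro M
    induction M with
    | zero =>
      rw [Finset.sum_range_one]
      have hk01 : ⌊(2:ℝ)^(0:ℕ) * t⌋₊ = 0 ∨ ⌊(2:ℝ)^(0:ℕ) * t⌋₊ = 1 := by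
        have : ⌊(2:ℝ)^(0:ℕ) * t⌋₊ ≤ 1 := by
          rw [pow_zero, one_mul]
          have := Nat.floor_le_floor (R := ℝ) ht1
          simpa using this
        omega
      rcases hk01 with hk | hk
      · rw [hk]
        simp only [Nat.cast_zero, zero_div, hW0, abs_zero, ENNReal.ofReal_zero]
        exact zero_le
      · rw [hk]
        have hmem : (0:ℕ) ∈ Finset.range (2^(0:ℕ)) := by simp
        have hle := le_biSup (f := fun k : ℕ =>
          ENNReal.ofReal |W (((k:ℝ)+1)/2^(0:ℕ)) ω - W ((k:ℝ)/2^(0:ℕ)) ω|) hmem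
        refine le_trans ?_ hle
        simp only [Nat.cast_zero, Nat.cast_one, pow_zero, zero_add, div_one, zero_div]
        rw [hW0, sub_zero]
    | succ M ih =>
      set k0 := ⌊(2:ℝ)^M * t⌋₊ with hk0
      set k1 := ⌊(2:ℝ)^(M+1) * t⌋₊ with hk1
      have hfl : (k0:ℝ) ≤ 2^M * t := Nat.floor_le (by positivity)
      have hfu : (2:ℝ)^M * t < (k0:ℝ) + 1 := Nat.lt_floor_add_one _
      have h2a : 2*k0 ≤ k1 := by
        rw [hk1]
        apply Nat.le_floor
        push_cast
        have hX : (2:ℝ)^(M+1)*t = 2*(2^M*t) := by ring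
        linarith [hfl]
      have h2b : k1 ≤ 2*k0 + 1 := by
        have : k1 < 2*k0 + 2 := by
          rw [hk1]
          apply Nat.floor_lt (by positivity) |>.mpr
          push_cast
          have hX : (2:ℝ)^(M+1)*t = 2*(2^M*t) := by ring
          linarith [hfu]
        omega
      rcases (by omega : k1 = 2*k0 ∨ k1 = 2*k0 + 1) with hcase | hcase
      · have heq : ((k1:ℝ))/2^(M+1) = (k0:ℝ)/2^M := by
          rw [hcase]
          push_cast
          field_simp
          ring
        rw [heq]
        refine le_trans ih ?_
        exact Finset.sum_le_sum_of_subset (Finset.range_subset_range.mpr (by omega))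
      · have hk1le : k1 ≤ 2^(M+1) := by
          have h1 : (2:ℝ)^(M+1) * t ≤ ((2^(M+1) : ℕ) : ℝ) := by
            push_cast
            have := mul_le_mul_of_nonneg_left ht1
              (le_of_lt (pow_pos (by norm_num : (0:ℝ) < 2) (M+1)))
            linarith
          have := Nat.floor_le_floor h1
          rwa [Nat.floor_natCast] at this
        have hk0lt : k0 < 2^M := by omega
        have hmem : 2*k0 ∈ Finset.range (2^(M+1)) := by
          rw [Finset.mem_range]
          omega
        have ha0 : (((2*k0 : ℕ):ℝ))/2^(M+1) = (k0:ℝ)/2^M := by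
          push_cast
          field_simp
          ring
        have ha1 : (((2*k0 : ℕ):ℝ)+1)/2^(M+1) = ((k1:ℝ))/2^(M+1) := by
          rw [hcase]
          push_cast
          ring
        have htri : |W ((k1:ℝ)/2^(M+1)) ω| ≤ |W ((k0:ℝ)/2^M) ω|
            + |W ((k1:ℝ)/2^(M+1)) ω - W ((k0:ℝ)/2^M) ω| := by
          have : W ((k1:ℝ)/2^(M+1)) ω = W ((k0:ℝ)/2^M) ω
              + (W ((k1:ℝ)/2^(M+1)) ω - W ((k0:ℝ)/2^M) ω) := by ring
          nth_rewrite 1 [this]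
          exact abs_add_le _ _
        calc ENNReal.ofReal |W ((k1:ℝ)/2^(M+1)) ω|
            ≤ ENNReal.ofReal (|W ((k0:ℝ)/2^M) ω|
              + |W ((k1:ℝ)/2^(M+1)) ω - W ((k0:ℝ)/2^M) ω|) := ENNReal.ofReal_le_ofReal htri
          _ ≤ ENNReal.ofReal |W ((k0:ℝ)/2^M) ω|
              + ENNReal.ofReal |W ((k1:ℝ)/2^(M+1)) ω - W ((k0:ℝ)/2^M) ω| :=
            ENNReal.ofReal_add_le
          _ ≤ (∑ m ∈ Finset.range (M+1), DyMax W m ω) + DyMax W (M+1) ω := by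
            refine add_le_add ih ?_
            have hle := le_biSup (f := fun k : ℕ =>
              ENNReal.ofReal |W (((k:ℝ)+1)/2^(M+1)) ω - W ((k:ℝ)/2^(M+1)) ω|) hmem
            refine le_trans (le_of_eq ?_) hle
            beta_reduce
            rw [ha0, ha1]
          _ = ∑ m ∈ Finset.range (M+2), DyMax W m ω := (Finset.sum_range_succ _ _).symm
  have hT : Filter.Tendsto (fun M : ℕ => ENNReal.ofReal |W ((⌊(2:ℝ)^M * t⌋₊ : ℝ)/2^M) ω|)
      atTop (nhds (ENNReal.ofReal |W t ω|)) := by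
    refine (ENNReal.continuous_ofReal.tendsto _).comp ?_
    refine (continuous_abs.tendsto _).comp ?_
    exact ((hcont.tendsto t).comp (dyadic_tendsto ht0))
  refine le_of_tendsto hT (Filter.Eventually.of_forall (fun M => le_trans (key M) ?_))
  exact ENNReal.sum_le_tsum _
/-- Countable dyadic version of the Bessel sup, in `ℝ≥0∞`. -/
noncomputable def besselProxy (W₁ W₂ : ℝ → Ω₂ → ℝ) (ω : Ω₂) : ℝ≥0∞ :=
  ⨆ (m : ℕ) (k : ℕ) (_ : k ≤ 2^m),
    ENNReal.ofReal (W₁ ((k:ℝ)/2^m) ω^2 + W₂ ((k:ℝ)/2^m) ω^2)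

lemma measurable_besselProxy {W₁ W₂ : ℝ → Ω₂ → ℝ} (h1 : ∀ t, Measurable (W₁ t))
    (h2 : ∀ t, Measurable (W₂ t)) : Measurable (besselProxy W₁ W₂) := by
  refine Measurable.iSup (fun m => Measurable.iSup (fun k => Measurable.iSup (fun _ => ?_)))
  exact (((h1 _).pow_const 2).add ((h2 _).pow_const 2)).ennreal_ofReal

lemma gBound_ne_top {W : ℝ → Ω₂ → ℝ} (hBM : IsStdBM P W) :
    ∀ᵐ ω ∂P, gBound W ω ≠ ⊤ := by
  have h4 := ae_lt_top ((measurable_gBound hBM.meas).pow measurable_const)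
    (lintegral_gBound4_lt_top hBM).ne
  filter_upwards [h4] with ω hω
  intro htop
  rw [htop, ENNReal.top_rpow_of_pos (by norm_num : (0:ℝ) < 4)] at hω
  exact absurd hω (lt_irrefl _)

lemma bessel_ae_eq {W₁ W₂ : ℝ → Ω₂ → ℝ} (hBM₁ : IsStdBM P W₁) (hBM₂ : IsStdBM P W₂) :
    ∀ᵐ ω ∂P, besselMax W₁ W₂ ω = (besselProxy W₁ W₂ ω).toReal := by
  haveI : Nonempty (Set.Icc (0:ℝ) 1) := ⟨⟨0, by norm_num, by norm_num⟩⟩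
  filter_upwards [hBM₁.cont, hBM₂.cont] with ω hc1 hc2
  set f : ℝ → ℝ := fun t => W₁ t ω^2 + W₂ t ω^2 with hf
  have hfc : Continuous f := ((hc1.pow 2).add (hc2.pow 2))
  have hfnn : ∀ t, 0 ≤ f t := fun t => by positivity
  have hbdd : BddAbove (Set.range fun t : Set.Icc (0:ℝ) 1 => f t) := by
    have h1 : BddAbove (f '' Set.Icc 0 1) := (isCompact_Icc.image hfc).bddAbove
    have h2 : (Set.range fun t : Set.Icc (0:ℝ) 1 => f t) = f '' Set.Icc 0 1 :=
      (Set.image_eq_range f _).symm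
    rwa [h2]
  have hBMnn : 0 ≤ besselMax W₁ W₂ ω := Real.iSup_nonneg (fun t => hfnn t)
  have hfle : ∀ t, t ∈ Set.Icc (0:ℝ) 1 → f t ≤ besselMax W₁ W₂ ω := fun t ht =>
    le_ciSup hbdd (⟨t, ht⟩ : Set.Icc (0:ℝ) 1)
  have hEle : besselProxy W₁ W₂ ω ≤ ENNReal.ofReal (besselMax W₁ W₂ ω) := by
    refine iSup_le (fun m => iSup_le (fun k => iSup_le (fun hk => ?_)))
    refine ENNReal.ofReal_le_ofReal (hfle _ ?_)
    constructor
    · positivity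
    · rw [div_le_one (by positivity)]
      calc (k:ℝ) ≤ (2^m : ℕ) := by exact_mod_cast hk
      _ = (2:ℝ)^m := by push_cast; ring
  have hEne : besselProxy W₁ W₂ ω ≠ ⊤ := ne_top_of_le_ne_top ENNReal.ofReal_ne_top hEle
  have hclaim : ∀ t ∈ Set.Icc (0:ℝ) 1, f t ≤ (besselProxy W₁ W₂ ω).toReal := by
    rintro t ⟨ht0, ht1⟩
    have hseq : ∀ M : ℕ, f ((⌊(2:ℝ)^M * t⌋₊:ℝ)/2^M) ≤ (besselProxy W₁ W₂ ω).toReal := by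
      intro M
      have hkle : ⌊(2:ℝ)^M * t⌋₊ ≤ 2^M := by
        have h1 : (2:ℝ)^M * t ≤ ((2^M : ℕ) : ℝ) := by
          push_cast
          have := mul_le_mul_of_nonneg_left ht1
            (le_of_lt (pow_pos (by norm_num : (0:ℝ) < 2) M))
          linarith
        have := Nat.floor_le_floor h1
        rwa [Nat.floor_natCast] at this
      have hmem : ENNReal.ofReal (f ((⌊(2:ℝ)^M * t⌋₊:ℝ)/2^M)) ≤ besselProxy W₁ W₂ ω := by
        refine le_trans ?_ (le_iSup _ M)
        refine le_trans ?_ (le_iSup _ ⌊(2:ℝ)^M * t⌋₊)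
        exact le_iSup (fun _ : ⌊(2:ℝ)^M * t⌋₊ ≤ 2^M => ENNReal.ofReal
          (W₁ ((⌊(2:ℝ)^M * t⌋₊:ℝ)/2^M) ω^2 + W₂ ((⌊(2:ℝ)^M * t⌋₊:ℝ)/2^M) ω^2)) hkle
      calc f ((⌊(2:ℝ)^M * t⌋₊:ℝ)/2^M)
          = (ENNReal.ofReal (f ((⌊(2:ℝ)^M * t⌋₊:ℝ)/2^M))).toReal :=
            (ENNReal.toReal_ofReal (hfnn _)).symm
        _ ≤ (besselProxy W₁ W₂ ω).toReal := ENNReal.toReal_mono hEne hmem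
    have htd : Filter.Tendsto (fun M : ℕ => f ((⌊(2:ℝ)^M * t⌋₊:ℝ)/2^M)) atTop (nhds (f t)) :=
      (hfc.tendsto t).comp (dyadic_tendsto ht0)
    exact le_of_tendsto htd (Filter.Eventually.of_forall hseq)
  refine le_antisymm ?_ ?_
  · exact ciSup_le (fun t => hclaim t t.2)
  · calc (besselProxy W₁ W₂ ω).toReal ≤ (ENNReal.ofReal (besselMax W₁ W₂ ω)).toReal :=
        ENNReal.toReal_mono ENNReal.ofReal_ne_top hEle
      _ = besselMax W₁ W₂ ω := ENNReal.toReal_ofReal hBMnn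

lemma bessel_bounds {W₁ W₂ : ℝ → Ω₂ → ℝ} (hBM₁ : IsStdBM P W₁) (hBM₂ : IsStdBM P W₂) :
    ∀ᵐ ω ∂P, ENNReal.ofReal (besselMax W₁ W₂ ω) ≤
        gBound W₁ ω^(2:ℕ) + gBound W₂ ω^(2:ℕ) ∧
      ENNReal.ofReal (besselOne W₁ W₂ ω) ≤ gBound W₁ ω^(2:ℕ) + gBound W₂ ω^(2:ℕ) := by
  haveI : Nonempty (Set.Icc (0:ℝ) 1) := ⟨⟨0, by norm_num, by norm_num⟩⟩
  filter_upwards [chain_bound hBM₁, chain_bound hBM₂, gBound_ne_top hBM₁, gBound_ne_top hBM₂]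
    with ω h1 h2 hg1 hg2
  have hWle : ∀ t ∈ Set.Icc (0:ℝ) 1, W₁ t ω^2 + W₂ t ω^2 ≤
      (gBound W₁ ω).toReal^2 + (gBound W₂ ω).toReal^2 := by
    intro t ht
    have e1 : |W₁ t ω| ≤ (gBound W₁ ω).toReal :=
      (ENNReal.ofReal_le_iff_le_toReal hg1).mp (h1 t ht)
    have e2 : |W₂ t ω| ≤ (gBound W₂ ω).toReal :=
      (ENNReal.ofReal_le_iff_le_toReal hg2).mp (h2 t ht)
    have q1 : W₁ t ω^2 ≤ (gBound W₁ ω).toReal^2 := by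
      rw [← sq_abs]
      exact pow_le_pow_left₀ (abs_nonneg _) e1 2
    have q2 : W₂ t ω^2 ≤ (gBound W₂ ω).toReal^2 := by
      rw [← sq_abs]
      exact pow_le_pow_left₀ (abs_nonneg _) e2 2
    linarith
  have hofReal : ENNReal.ofReal ((gBound W₁ ω).toReal^2 + (gBound W₂ ω).toReal^2) ≤
      gBound W₁ ω^(2:ℕ) + gBound W₂ ω^(2:ℕ) := by
    refine le_trans ENNReal.ofReal_add_le (add_le_add ?_ ?_) <;>
    · rw [ENNReal.ofReal_pow ENNReal.toReal_nonneg, ENNReal.ofReal_toReal (by assumption)]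
  constructor
  · refine le_trans (ENNReal.ofReal_le_ofReal ?_) hofReal
    exact ciSup_le (fun t => hWle t t.2)
  · refine le_trans (ENNReal.ofReal_le_ofReal ?_) hofReal
    exact hWle 1 (by norm_num)

lemma sq_add_sq_le (a b : ℝ≥0∞) : (a + b)^(2:ℕ) ≤ 4 * a^(2:ℕ) + 4 * b^(2:ℕ) := by
  rcases le_total a b with h | h
  · calc (a+b)^(2:ℕ) ≤ (b+b)^(2:ℕ) := pow_le_pow_left' (add_le_add_left h b) 2
    _ = 4 * b^(2:ℕ) := by ring
    _ ≤ 4 * a^(2:ℕ) + 4 * b^(2:ℕ) := le_add_self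
  · calc (a+b)^(2:ℕ) ≤ (a+a)^(2:ℕ) := pow_le_pow_left' (add_le_add_right h a) 2
    _ = 4 * a^(2:ℕ) := by ring
    _ ≤ 4 * a^(2:ℕ) + 4 * b^(2:ℕ) := le_self_add

lemma ofReal_rpow_le_one_add_sq {x p : ℝ} (hx : 0 ≤ x) (hp0 : 0 < p) (hp2 : p ≤ 2) :
    ENNReal.ofReal (x ^ p) ≤ 1 + ENNReal.ofReal (x^(2:ℕ)) := by
  rcases le_total x 1 with h | h
  · calc ENNReal.ofReal (x ^ p) ≤ ENNReal.ofReal 1 :=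
        ENNReal.ofReal_le_ofReal (Real.rpow_le_one hx h hp0.le)
    _ = 1 := ENNReal.ofReal_one
    _ ≤ _ := le_self_add
  · have h1 : x ^ p ≤ x ^ (2:ℝ) := Real.rpow_le_rpow_of_exponent_le h hp2
    have h2 : x ^ (2:ℝ) = x^(2:ℕ) := by
      rw [← Real.rpow_natCast x 2]
      norm_num
    calc ENNReal.ofReal (x ^ p) ≤ ENNReal.ofReal (x^(2:ℕ)) :=
        ENNReal.ofReal_le_ofReal (h1.trans_eq h2)
      _ ≤ _ := le_add_self

/-- Main moment bound on the Bessel side. -/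
lemma bessel_moments {W₁ W₂ : ℝ → Ω₂ → ℝ} (hBM₁ : IsStdBM P W₁) (hBM₂ : IsStdBM P W₂)
    {p : ℝ} (hp0 : 0 < p) (hp2 : p ≤ 2) :
    ∫⁻ ω, ENNReal.ofReal (besselMax W₁ W₂ ω ^ p) ∂P < ⊤ ∧
    ∫⁻ ω, ENNReal.ofReal (besselOne W₁ W₂ ω ^ p) ∂P < ⊤ := by
  have hnnM : ∀ ω, 0 ≤ besselMax W₁ W₂ ω := fun ω => Real.iSup_nonneg (fun t => by positivity)
  have hnnO : ∀ ω, 0 ≤ besselOne W₁ W₂ ω := fun ω => by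
    unfold besselOne; positivity
  have hg4 : ∀ (W : ℝ → Ω₂ → ℝ), IsStdBM P W →
      ∫⁻ ω, (gBound W ω^(2:ℕ))^(2:ℕ) ∂P < ⊤ := by
    intro W hBM
    have : ∀ ω, (gBound W ω^(2:ℕ))^(2:ℕ) = gBound W ω ^ (4:ℝ) := by
      intro ω
      rw [← pow_mul, ← ENNReal.rpow_natCast]
      norm_num
    simp_rw [this]
    exact lintegral_gBound4_lt_top hBM
  have key : ∀ (B : Ω₂ → ℝ), (∀ ω, 0 ≤ B ω) →
      (∀ᵐ ω ∂P, ENNReal.ofReal (B ω) ≤ gBound W₁ ω^(2:ℕ) + gBound W₂ ω^(2:ℕ)) →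
      ∫⁻ ω, ENNReal.ofReal (B ω ^ p) ∂P < ⊤ := by
    intro B hBnn hBle
    have hpt : ∀ᵐ ω ∂P, ENNReal.ofReal (B ω ^ p) ≤
        1 + (4 * (gBound W₁ ω^(2:ℕ))^(2:ℕ) + 4 * (gBound W₂ ω^(2:ℕ))^(2:ℕ)) := by
      filter_upwards [hBle] with ω hle
      calc ENNReal.ofReal (B ω ^ p) ≤ 1 + ENNReal.ofReal (B ω^(2:ℕ)) :=
          ofReal_rpow_le_one_add_sq (hBnn ω) hp0 hp2
        _ ≤ 1 + (gBound W₁ ω^(2:ℕ) + gBound W₂ ω^(2:ℕ))^(2:ℕ) := by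
            refine add_le_add_right ?_ 1
            rw [ENNReal.ofReal_pow (hBnn ω)]
            exact pow_le_pow_left' hle 2
        _ ≤ 1 + (4 * (gBound W₁ ω^(2:ℕ))^(2:ℕ) + 4 * (gBound W₂ ω^(2:ℕ))^(2:ℕ)) :=
            add_le_add_right (sq_add_sq_le _ _) 1
    calc ∫⁻ ω, ENNReal.ofReal (B ω ^ p) ∂P
        ≤ ∫⁻ ω, 1 + (4 * (gBound W₁ ω^(2:ℕ))^(2:ℕ) + 4 * (gBound W₂ ω^(2:ℕ))^(2:ℕ)) ∂P :=
          lintegral_mono_ae hpt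
      _ ≤ ∫⁻ _ω, (1:ℝ≥0∞) ∂P + (4 * ∫⁻ ω, (gBound W₁ ω^(2:ℕ))^(2:ℕ) ∂P
            + 4 * ∫⁻ ω, (gBound W₂ ω^(2:ℕ))^(2:ℕ) ∂P) := by
          rw [lintegral_add_left measurable_const]
          refine add_le_add_right ?_ _
          rw [lintegral_add_left (by
            exact (((measurable_gBound hBM₁.meas).pow_const 2).pow_const 2).const_mul 4)]
          rw [lintegral_const_mul _ (((measurable_gBound hBM₁.meas).pow_const 2).pow_const 2),
            lintegral_const_mul _ (((measurable_gBound hBM₂.meas).pow_const 2).pow_const 2)]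
      _ < ⊤ := by
          have h1 := hg4 W₁ hBM₁
          have h2 := hg4 W₂ hBM₂
          refine ENNReal.add_lt_top.mpr ⟨?_, ENNReal.add_lt_top.mpr ⟨?_, ?_⟩⟩
          · simp
          · exact ENNReal.mul_lt_top (by norm_num) h1
          · exact ENNReal.mul_lt_top (by norm_num) h2
  constructor
  · refine key _ hnnM ?_
    filter_upwards [bessel_bounds hBM₁ hBM₂] with ω hω using hω.1
  · refine key _ hnnO ?_
    filter_upwards [bessel_bounds hBM₁ hBM₂] with ω hω using hω.2

end BMSide
/-- Under assumptions (B), `E[M_∞^{β+δ}] < ∞`. -/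
theorem Minfty_moment
    (Pr : Measure Ω) [IsProbabilityMeasure Pr]
    (xi : ℤ → Ω → ℕ) (lam : ℤ → Ω → ℝ)
    (hEnv : IsSparseEnv Pr xi lam)
    -- assumptions (B)
    (β δ : ℝ) (hβ1 : 1 ≤ β) (hβ2 : β < 2) (hδ : 0 < δ) (hβδ : β + δ ≤ 2)
    (ℓ : ℝ → ℝ)
    (hslow : ∀ c : ℝ, 0 < c → Tendsto (fun x : ℝ => ℓ (c * x) / ℓ x) atTop (nhds 1))
    (htail : Tendsto (fun x : ℝ =>
      (Pr {ω | x < (xi 1 ω : ℝ)}).toReal / (x ^ (-β) * ℓ x)) atTop (nhds 1))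
    (hmomρ : Integrable (fun ω => rhoF lam 1 ω ^ (β + δ)) Pr)
    (hmomρ1 : ∫ ω, rhoF lam 1 ω ^ (β + δ) ∂Pr < 1)
    (hindepξρ : IndepFun (fun ω => xi 1 ω) (fun ω => rhoF lam 1 ω) Pr)
    (hmomξ : Integrable (fun ω => (xi 1 ω : ℝ)) Pr)
 :
    ∀ S : MinfSetup Pr xi lam,
      Integrable (fun ω₂ => (Minfty S.W₁ S.W₂ S.Mψ ω₂) ^ (β + δ)) S.P₂ := by
  intro S
  haveI := S.prob
  have hp0 : 0 < β + δ := by linarith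
  have hp2 : β + δ ≤ 2 := hβδ
  set p := β + δ with hpdef
  -- Pr side
  have hMPmeas : Measurable (MPsiOne xi lam) :=
    measurable_MPsiOne hEnv.meas_xi hEnv.xi_pos hEnv.meas_lam
  have hPr : ∫⁻ ω, ENNReal.ofReal (MPsiOne xi lam ω ^ p) ∂Pr < ⊤ :=
    mpsi_lintegral_lt_top hEnv hp0 hmomρ hmomρ1
  have hMψae : AEMeasurable S.Mψ S.P₂ := by
    by_contra h
    have h0 : S.P₂.map S.Mψ = 0 := Measure.map_of_not_aemeasurable h
    rw [S.law] at h0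
    have h1 : (Pr.map (MPsiOne xi lam)) Set.univ = 1 := by
      rw [Measure.map_apply hMPmeas MeasurableSet.univ]
      simp
    rw [h0] at h1
    simp at h1
  set Mψ' := hMψae.mk S.Mψ with hMψ'def
  have hMψ'meas : Measurable Mψ' := hMψae.measurable_mk
  have hMψeq : S.Mψ =ᵐ[S.P₂] Mψ' := hMψae.ae_eq_mk
  have hmap' : S.P₂.map Mψ' = Pr.map (MPsiOne xi lam) := by
    rw [← Measure.map_congr hMψeq, S.law]
  have hMψ'nn : ∀ᵐ ω ∂S.P₂, 0 ≤ Mψ' ω := by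
    have h1 : S.P₂.map Mψ' (Set.Iio 0) = 0 := by
      rw [hmap', Measure.map_apply hMPmeas measurableSet_Iio]
      have he : MPsiOne xi lam ⁻¹' (Set.Iio 0) = ∅ := by
        ext ω
        simp only [Set.mem_preimage, Set.mem_Iio, Set.mem_empty_iff_false, iff_false, not_lt]
        exact ENNReal.toReal_nonneg
      rw [he]; simp
    rw [Measure.map_apply hMψ'meas measurableSet_Iio] at h1
    rw [ae_iff]
    convert h1 using 2
    ext ω
    simp [not_le]
  have hMψint : ∫⁻ ω, ENNReal.ofReal (Mψ' ω ^ p) ∂S.P₂ < ⊤ := by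
    have hmeasfn : Measurable (fun x : ℝ => ENNReal.ofReal (x ^ p)) :=
      (measurable_id'.pow measurable_const).ennreal_ofReal
    have e1 : ∫⁻ ω, ENNReal.ofReal (Mψ' ω ^ p) ∂S.P₂
        = ∫⁻ x, ENNReal.ofReal (x ^ p) ∂(S.P₂.map Mψ') :=
      (lintegral_map hmeasfn hMψ'meas).symm
    rw [e1, hmap', lintegral_map hmeasfn hMPmeas]
    exact hPr
  -- bessel moments
  obtain ⟨hBMfin, hB1fin⟩ := bessel_moments (P := S.P₂) S.bm₁ S.bm₂ hp0 hp2
  -- independence of the Bessel part and Mψ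
  have hW1m : Measurable[bmSig S.W₁ ⊔ bmSig S.W₂] (S.W₁ 1) := by
    refine Measurable.of_comap_le (le_trans ?_ le_sup_left)
    exact le_iSup (fun t => MeasurableSpace.comap (S.W₁ t) inferInstance) 1
  have hW2m : Measurable[bmSig S.W₁ ⊔ bmSig S.W₂] (S.W₂ 1) := by
    refine Measurable.of_comap_le (le_trans ?_ le_sup_right)
    exact le_iSup (fun t => MeasurableSpace.comap (S.W₂ t) inferInstance) 1
  set F : S.Ω₂ → ℝ≥0∞ := fun ω => ENNReal.ofReal (besselOne S.W₁ S.W₂ ω ^ p) with hF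
  set G : S.Ω₂ → ℝ≥0∞ := fun ω => ENNReal.ofReal (S.Mψ ω ^ p) with hG
  have hFjoin : Measurable[bmSig S.W₁ ⊔ bmSig S.W₂] F := by
    have hb : Measurable[bmSig S.W₁ ⊔ bmSig S.W₂] (besselOne S.W₁ S.W₂) :=
      ((hW1m.pow_const 2).add (hW2m.pow_const 2))
    exact (hb.pow measurable_const).ennreal_ofReal
  have hGcomap : Measurable[MeasurableSpace.comap S.Mψ inferInstance] G := by
    have h0 : Measurable[MeasurableSpace.comap S.Mψ inferInstance] S.Mψ :=
      Measurable.of_comap_le le_rfl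
    exact (h0.pow measurable_const).ennreal_ofReal
  have hIF : IndepFun G F S.P₂ := by
    rw [IndepFun_iff_Indep]
    refine indep_of_indep_of_le_left (indep_of_indep_of_le_right S.indepM ?_) ?_
    · exact hFjoin.comap_le
    · exact hGcomap.comap_le
  have hFmeas : Measurable F := by
    have hb : Measurable (besselOne S.W₁ S.W₂) :=
      (((S.bm₁.meas 1).pow_const 2).add ((S.bm₂.meas 1).pow_const 2))
    exact (hb.pow measurable_const).ennreal_ofReal
  have hGae : AEMeasurable G S.P₂ := (hMψae.pow aemeasurable_const).ennreal_ofReal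
  have hGint : ∫⁻ ω, G ω ∂S.P₂ < ⊤ := by
    have e : ∫⁻ ω, G ω ∂S.P₂ = ∫⁻ ω, ENNReal.ofReal (Mψ' ω ^ p) ∂S.P₂ := by
      refine lintegral_congr_ae ?_
      filter_upwards [hMψeq] with ω hω
      rw [hG]
      simp only
      rw [hω]
    rw [e]
    exact hMψint
  have hprodint : ∫⁻ ω, G ω * F ω ∂S.P₂ < ⊤ := by
    have hmul := lintegral_mul_eq_lintegral_mul_lintegral_of_indepFun' hGae
      hFmeas.aemeasurable hIF
    calc ∫⁻ ω, G ω * F ω ∂S.P₂ = ∫⁻ ω, (G * F) ω ∂S.P₂ := rfl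
      _ = (∫⁻ ω, G ω ∂S.P₂) * ∫⁻ ω, F ω ∂S.P₂ := hmul
      _ < ⊤ := ENNReal.mul_lt_top hGint hB1fin
  -- pointwise estimates
  have hMnn : ∀ ω, 0 ≤ Minfty S.W₁ S.W₂ S.Mψ ω := fun ω =>
    le_trans (Real.iSup_nonneg (fun t => by positivity)) (le_max_left _ _)
  have hsplit : ∀ ω, ENNReal.ofReal (Minfty S.W₁ S.W₂ S.Mψ ω ^ p) ≤
      ENNReal.ofReal (besselMax S.W₁ S.W₂ ω ^ p)
        + ENNReal.ofReal ((besselOne S.W₁ S.W₂ ω * S.Mψ ω / 2) ^ p) := by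
    intro ω
    unfold Minfty
    rcases max_choice (besselMax S.W₁ S.W₂ ω) (besselOne S.W₁ S.W₂ ω * S.Mψ ω / 2) with h | h
    · rw [h]; exact le_self_add
    · rw [h]; exact le_add_self
  have hsecond : ∀ᵐ ω ∂S.P₂, ENNReal.ofReal ((besselOne S.W₁ S.W₂ ω * S.Mψ ω / 2) ^ p) ≤
      G ω * F ω := by
    filter_upwards [hMψeq, hMψ'nn] with ω h1 h2
    have hMn : 0 ≤ S.Mψ ω := by rw [h1]; exact h2
    have hOnn : 0 ≤ besselOne S.W₁ S.W₂ ω := by unfold besselOne; positivity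
    have hmul : (besselOne S.W₁ S.W₂ ω * S.Mψ ω / 2) ^ p
        = (S.Mψ ω)^p * (besselOne S.W₁ S.W₂ ω)^p * ((1:ℝ)/2)^p := by
      rw [show besselOne S.W₁ S.W₂ ω * S.Mψ ω / 2
        = S.Mψ ω * (besselOne S.W₁ S.W₂ ω * (1/2)) by ring]
      rw [Real.mul_rpow hMn (by positivity), Real.mul_rpow hOnn (by norm_num)]
      ring
    rw [hmul]
    have hhalf : ((1:ℝ)/2)^p ≤ 1 := Real.rpow_le_one (by norm_num) (by norm_num) hp0.le
    calc ENNReal.ofReal ((S.Mψ ω)^p * (besselOne S.W₁ S.W₂ ω)^p * ((1:ℝ)/2)^p)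
        ≤ ENNReal.ofReal ((S.Mψ ω)^p * (besselOne S.W₁ S.W₂ ω)^p) := by
          refine ENNReal.ofReal_le_ofReal ?_
          have hnn : 0 ≤ (S.Mψ ω)^p * (besselOne S.W₁ S.W₂ ω)^p := by
            have := Real.rpow_nonneg hMn p
            have := Real.rpow_nonneg hOnn p
            positivity
          exact mul_le_of_le_one_right hnn hhalf
      _ = G ω * F ω := by
          rw [ENNReal.ofReal_mul (Real.rpow_nonneg hMn p)]
  have hBMaemeas : AEMeasurable (fun ω => ENNReal.ofReal (besselMax S.W₁ S.W₂ ω ^ p)) S.P₂ := by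
    have hmeas : Measurable (fun ω => ENNReal.ofReal ((besselProxy S.W₁ S.W₂ ω).toReal ^ p)) :=
      (((measurable_besselProxy S.bm₁.meas S.bm₂.meas).ennreal_toReal).pow
        measurable_const).ennreal_ofReal
    refine hmeas.aemeasurable.congr ?_
    filter_upwards [bessel_ae_eq (P := S.P₂) S.bm₁ S.bm₂] with ω h1
    rw [h1]
  constructor
  · -- a.e. strong measurability
    have hcand : Measurable (fun ω => (max ((besselProxy S.W₁ S.W₂ ω).toReal)
        (besselOne S.W₁ S.W₂ ω * Mψ' ω / 2)) ^ p) := by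
      refine Measurable.pow ?_ measurable_const
      refine Measurable.max ((measurable_besselProxy S.bm₁.meas S.bm₂.meas).ennreal_toReal) ?_
      exact ((((S.bm₁.meas 1).pow_const 2).add ((S.bm₂.meas 1).pow_const 2)).mul
        hMψ'meas).div_const 2
    refine hcand.aestronglyMeasurable.congr ?_
    filter_upwards [bessel_ae_eq (P := S.P₂) S.bm₁ S.bm₂, hMψeq] with ω h1 h2
    simp only [Minfty, besselOne]
    rw [← h1, ← h2]
  · rw [hasFiniteIntegral_iff_ofReal
      (Filter.Eventually.of_forall (fun ω => Real.rpow_nonneg (hMnn ω) p))]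
    calc ∫⁻ ω, ENNReal.ofReal (Minfty S.W₁ S.W₂ S.Mψ ω ^ p) ∂S.P₂
        ≤ ∫⁻ ω, (ENNReal.ofReal (besselMax S.W₁ S.W₂ ω ^ p) + G ω * F ω) ∂S.P₂ := by
          refine lintegral_mono_ae ?_
          filter_upwards [hsecond] with ω h2
          exact le_trans (hsplit ω) (add_le_add le_rfl h2)
      _ = ∫⁻ ω, ENNReal.ofReal (besselMax S.W₁ S.W₂ ω ^ p) ∂S.P₂
            + ∫⁻ ω, G ω * F ω ∂S.P₂ := lintegral_add_left' hBMaemeas _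
      _ < ⊤ := ENNReal.add_lt_top.mpr ⟨hBMfin, hprodint⟩
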